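/- Let Ψ:[0,∞)→[0,∞) be a C¹ function satisfying Ψ'(t) ≤ -c·Ψ(t) for all t≥0, where c>0. Then for all t, √(-Ψ'(t)) ≤ -(2/√c)·(d/dt)√(Ψ(t)) wherever Ψ(t)>0; consequently ∫₀^∞ √(-Ψ'(t)) dt ≤ (2/√c)·√(Ψ(0)), provided Ψ(t)→0 as t→∞ and Ψ' ≤ 0. -/

import Mathlib

open Filter Set
open MeasureTheory

private lemma aux_pw (Ψ : ℝ → ℝ) (c : ℝ) (hc : 0 < c) (hΨ : ContDiff ℝ 1 Ψ)
    (hder : ∀ t, 0 ≤ t → deriv Ψ t ≤ -c * Ψ t)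
    {t : ℝ} (ht : 0 ≤ t) (hpt : 0 < Ψ t) :
    Real.sqrt (-deriv Ψ t) ≤ -(2 / Real.sqrt c) * deriv (fun s => Real.sqrt (Ψ s)) t := by
  have hdiff : HasDerivAt Ψ (deriv Ψ t) t := ((hΨ.differentiable one_ne_zero) t).hasDerivAt
  have hs : HasDerivAt (fun s => Real.sqrt (Ψ s)) (deriv Ψ t / (2 * Real.sqrt (Ψ t))) t :=
    hdiff.sqrt (ne_of_gt hpt)
  rw [hs.deriv]
  set a := -deriv Ψ t with ha
  have h1 : c * Ψ t ≤ a := by have := hder t ht; simp only [ha]; linarith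
  have ha0 : 0 < a := lt_of_lt_of_le (by positivity) h1
  have h2 : Real.sqrt c * Real.sqrt (Ψ t) ≤ Real.sqrt a := by
    rw [← Real.sqrt_mul hc.le]
    exact Real.sqrt_le_sqrt h1
  have hsq : Real.sqrt a * Real.sqrt a = a := Real.mul_self_sqrt ha0.le
  have hp : 0 < Real.sqrt (Ψ t) := Real.sqrt_pos.mpr hpt
  have hcp : 0 < Real.sqrt c := Real.sqrt_pos.mpr hc
  have key : Real.sqrt a ≤ a / (Real.sqrt c * Real.sqrt (Ψ t)) := by
    rw [le_div_iff₀ (by positivity)]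
    nlinarith [Real.sqrt_nonneg a]
  have hda : deriv Ψ t = -a := by rw [ha]; ring
  calc Real.sqrt a ≤ a / (Real.sqrt c * Real.sqrt (Ψ t)) := key
    _ = -(2 / Real.sqrt c) * (deriv Ψ t / (2 * Real.sqrt (Ψ t))) := by
        rw [hda]; field_simp

private lemma aux_int (Ψ : ℝ → ℝ) (c : ℝ) (hc : 0 < c) (hΨ : ContDiff ℝ 1 Ψ)
    (hpos : ∀ t, 0 ≤ t → 0 ≤ Ψ t)
    (hder : ∀ t, 0 ≤ t → deriv Ψ t ≤ -c * Ψ t)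
    (hdec : ∀ t, 0 ≤ t → deriv Ψ t ≤ 0) :
    ∀ b, 0 ≤ b → ∫ t in (0:ℝ)..b, Real.sqrt (-deriv Ψ t) ≤
      (2 / Real.sqrt c) * Real.sqrt (Ψ 0) := by
  set f : ℝ → ℝ := fun t => Real.sqrt (-deriv Ψ t) with hf
  set M : ℝ := (2 / Real.sqrt c) * Real.sqrt (Ψ 0) with hM
  have hM0 : 0 ≤ M := by positivity
  have hderc : Continuous (deriv Ψ) := hΨ.continuous_deriv le_rfl
  have hfc : Continuous f := Real.continuous_sqrt.comp hderc.neg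
  have hanti : AntitoneOn Ψ (Ici 0) :=
    antitoneOn_of_deriv_nonpos (convex_Ici 0) hΨ.continuous.continuousOn
      ((hΨ.differentiable one_ne_zero).differentiableOn)
      (fun x hx => hdec x (le_of_lt (by simpa using hx)))
  -- case where Ψ b > 0
  have case_pos : ∀ b, 0 ≤ b → 0 < Ψ b → ∫ t in (0:ℝ)..b, f t ≤ M := by
    intro b hb hΨb
    have hposall : ∀ t ∈ Icc (0:ℝ) b, 0 < Ψ t := fun t ht =>
      lt_of_lt_of_le hΨb (hanti ht.1 (le_trans ht.1 ht.2 : (0:ℝ) ≤ b) ht.2)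
    set g' : ℝ → ℝ := fun t => deriv Ψ t / (2 * Real.sqrt (Ψ t)) with hg'
    have huIcc : uIcc (0:ℝ) b = Icc 0 b := uIcc_of_le hb
    have hg : ∀ t ∈ uIcc (0:ℝ) b, HasDerivAt (fun s => Real.sqrt (Ψ s)) (g' t) t := by
      intro t ht
      rw [huIcc] at ht
      exact (((hΨ.differentiable one_ne_zero) t).hasDerivAt).sqrt (ne_of_gt (hposall t ht))
    have hgc : ContinuousOn g' (Icc (0:ℝ) b) := by
      apply hderc.continuousOn.div
      · exact (continuous_const.mul (Real.continuous_sqrt.comp hΨ.continuous)).continuousOn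
      · intro t ht
        have := hposall t ht
        positivity
    have hgi : IntervalIntegrable g' volume 0 b := (huIcc ▸ hgc).intervalIntegrable
    have hftc : ∫ t in (0:ℝ)..b, g' t =
        Real.sqrt (Ψ b) - Real.sqrt (Ψ 0) :=
      intervalIntegral.integral_eq_sub_of_hasDerivAt hg hgi
    have hmono : ∫ t in (0:ℝ)..b, f t ≤ ∫ t in (0:ℝ)..b, -(2 / Real.sqrt c) * g' t := by
      apply intervalIntegral.integral_mono_on hb (hfc.intervalIntegrable 0 b)
        (hgi.const_mul _)
      intro t ht
      have h := aux_pw Ψ c hc hΨ hder ht.1 (hposall t ht)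
      have hdg : deriv (fun s => Real.sqrt (Ψ s)) t = g' t :=
        (hg t (huIcc ▸ ht)).deriv
      rw [hdg] at h
      exact h
    calc ∫ t in (0:ℝ)..b, f t ≤ ∫ t in (0:ℝ)..b, -(2 / Real.sqrt c) * g' t := hmono
      _ = -(2 / Real.sqrt c) * (Real.sqrt (Ψ b) - Real.sqrt (Ψ 0)) := by
          rw [intervalIntegral.integral_const_mul, hftc]
      _ ≤ M := by
          have : 0 ≤ Real.sqrt (Ψ b) := Real.sqrt_nonneg _
          have hcp : 0 ≤ 2 / Real.sqrt c := by positivity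
          rw [hM]; nlinarith
  -- general case
  intro b hb
  by_cases hΨb : 0 < Ψ b
  · exact case_pos b hb hΨb
  · have hΨb0 : Ψ b = 0 := le_antisymm (not_lt.mp hΨb) (hpos b hb)
    set S : Set ℝ := {t | 0 ≤ t ∧ Ψ t ≤ 0} with hS
    have hbS : b ∈ S := ⟨hb, hΨb0.le⟩
    have hSbdd : BddBelow S := ⟨0, fun x hx => hx.1⟩
    have hSne : S.Nonempty := ⟨b, hbS⟩
    set T : ℝ := sInf S with hT
    have hT0 : 0 ≤ T := le_csInf hSne (fun x hx => hx.1)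
    have hTb : T ≤ b := csInf_le hSbdd hbS
    have hSclosed : IsClosed S := by
      have : S = Ici 0 ∩ Ψ ⁻¹' (Iic 0) := by ext x; simp [hS, mem_setOf_eq]
      rw [this]
      exact isClosed_Ici.inter (isClosed_Iic.preimage hΨ.continuous)
    have hTS : T ∈ S := hSclosed.csInf_mem hSne hSbdd
    have hΨT : Ψ T = 0 := le_antisymm hTS.2 (hpos T hT0)
    have hzero : ∀ t, T < t → Ψ t = 0 := fun t ht =>
      le_antisymm (hΨT ▸ hanti hT0 (le_trans hT0 ht.le) ht.le) (hpos t (le_trans hT0 ht.le))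
    have hderiv0 : ∀ t, T < t → deriv Ψ t = 0 := by
      intro t ht
      have hev : Ψ =ᶠ[nhds t] fun _ => (0:ℝ) := by
        filter_upwards [Ioi_mem_nhds ht] with s hs using hzero s hs
      rw [hev.deriv_eq]
      simp
    have hfzero : ∀ t, T < t → f t = 0 := by
      intro t ht
      simp [hf, hderiv0 t ht]
    have hpospre : ∀ t, 0 ≤ t → t < T → 0 < Ψ t := by
      intro t ht htT
      by_contra h
      exact absurd (csInf_le hSbdd ⟨ht, not_lt.mp h⟩) (not_le.mpr htT)
    -- split the integral
    have hsplit : ∫ t in (0:ℝ)..b, f t = (∫ t in (0:ℝ)..T, f t) + ∫ t in T..b, f t :=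
      (intervalIntegral.integral_add_adjacent_intervals (hfc.intervalIntegrable 0 T)
        (hfc.intervalIntegrable T b)).symm
    have h2 : ∫ t in T..b, f t = 0 := by
      rw [intervalIntegral.integral_of_le hTb]
      apply MeasureTheory.integral_eq_zero_of_ae
      exact MeasureTheory.ae_restrict_of_forall_mem measurableSet_Ioc
        (fun t ht => hfzero t ht.1)
    have h1 : ∫ t in (0:ℝ)..T, f t ≤ M := by
      rcases eq_or_lt_of_le hT0 with h0T | h0T
      · simp [← h0T, hM0]
      · -- T > 0 : take limit from the left
        set F : ℝ → ℝ := fun x => ∫ t in (0:ℝ)..x, f t with hF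
        have hFc : Continuous F :=
          intervalIntegral.continuous_primitive (fun a b => hfc.intervalIntegrable a b) 0
        have htend : Tendsto F (nhdsWithin T (Iio T)) (nhds (F T)) :=
          (hFc.tendsto T).mono_left nhdsWithin_le_nhds
        apply le_of_tendsto htend
        filter_upwards [Ioo_mem_nhdsLT_of_mem (⟨h0T, le_rfl⟩ : T ∈ Ioc 0 T)] with a ha
        exact case_pos a ha.1.le (hpospre a ha.1.le ha.2)
    rw [hsplit, h2, add_zero]
    exact h1

/-- Key estimate in deducing the Talagrand inequality from the log-Sobolev
inequality: if `Ψ ≥ 0` is `C¹`, nonincreasing (`Ψ' ≤ 0`), satisfies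
`Ψ' ≤ -c Ψ` with `c > 0` and `Ψ(t) → 0` as `t → ∞`, then
`√(-Ψ'(t)) ≤ -(2/√c) (√Ψ)'(t)` wherever `Ψ(t) > 0`, and
`∫₀^∞ √(-Ψ'(t)) dt ≤ (2/√c) √(Ψ(0))`. -/
theorem stmt_1 (Ψ : ℝ → ℝ) (c : ℝ) (hc : 0 < c)
    (hΨ : ContDiff ℝ 1 Ψ)
    (hpos : ∀ t, 0 ≤ t → 0 ≤ Ψ t)
    (hder : ∀ t, 0 ≤ t → deriv Ψ t ≤ -c * Ψ t)
    (hdec : ∀ t, 0 ≤ t → deriv Ψ t ≤ 0)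
    (hlim : Tendsto Ψ atTop (nhds 0)) :
    (∀ t, 0 ≤ t → 0 < Ψ t →
      Real.sqrt (-deriv Ψ t) ≤
        -(2 / Real.sqrt c) * deriv (fun s => Real.sqrt (Ψ s)) t) ∧
    ∫ t in Ioi (0 : ℝ), Real.sqrt (-deriv Ψ t) ≤
      (2 / Real.sqrt c) * Real.sqrt (Ψ 0) := by
  constructor
  · exact fun t ht hpt => aux_pw Ψ c hc hΨ hder ht hpt
  · set f : ℝ → ℝ := fun t => Real.sqrt (-deriv Ψ t) with hf
    set M : ℝ := (2 / Real.sqrt c) * Real.sqrt (Ψ 0) with hM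
    have hbound := aux_int Ψ c hc hΨ hpos hder hdec
    have hderc : Continuous (deriv Ψ) := hΨ.continuous_deriv le_rfl
    have hfc : Continuous f := Real.continuous_sqrt.comp hderc.neg
    have hIb : ∀ n : ℕ, IntegrableOn f (Ioc (0:ℝ) (n:ℝ)) volume :=
      fun n => (hfc.integrableOn_Ioc)
    have htop : Tendsto (fun n : ℕ => (n : ℝ)) atTop atTop :=
      tendsto_natCast_atTop_atTop
    have hnorm : ∀ n : ℕ, ∫ x in (0:ℝ)..(n:ℝ), ‖f x‖ ≤ M := by
      intro n
      have : ∀ x, ‖f x‖ = f x := fun x => Real.norm_of_nonneg (Real.sqrt_nonneg _)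
      simp_rw [this]
      exact hbound n n.cast_nonneg
    have hint : IntegrableOn f (Ioi (0:ℝ)) volume :=
      MeasureTheory.integrableOn_Ioi_of_intervalIntegral_norm_bounded M 0 hIb htop
        (Filter.Eventually.of_forall hnorm)
    have htend : Tendsto (fun n : ℕ => ∫ x in (0:ℝ)..(n:ℝ), f x) atTop
        (nhds (∫ x in Ioi (0:ℝ), f x)) :=
      MeasureTheory.intervalIntegral_tendsto_integral_Ioi 0 hint htop
    exact le_of_tendsto htend
      (Filter.Eventually.of_forall (fun n => hbound n n.cast_nonneg))
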